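/- Let b > 0 and let V be a nonnegative integrable function on (b,b+1) with ∫_b^{b+1} V(r) dr ≤ 3. Then for every continuously differentiable function u : [b,b+1] → ℝ, one has ∫_b^{b+1} ( (d/dr)( u(r)·r^{−1/2} ) )² · r dr − ∫_b^{b+1} V(r)·u(r)² dr ≥ −(3.555)² · ∫_b^{b+1} u(r)² dr. -/

import Mathlib

open MeasureTheory Set intervalIntegral

noncomputable section

def vB (x : ℝ) : ℝ := (1 : ℝ) + (505521/160000 : ℝ) * x ^ 2 + (255551481441/102400000000 : ℝ) * x ^ 4 + (14354071161059529/16384000000000000 : ℝ) * x ^ 6 + (7256284407409974159609/41943040000000000000000 : ℝ) * x ^ 8 + (3668204149918297547139701289/167772160000000000000000000000 : ℝ) * x ^ 10 + (206039358896760854925289881701841/107374182400000000000000000000000000 : ℝ) * x ^ 12 + (104157222748849444142687466287796364161/841813590016000000000000000000000000000000 : ℝ) * x ^ 14 + (52653663401221119852455510645273105807032881/8620171161763840000000000000000000000000000000000 : ℝ) * x ^ 16 + (328611513287021008999174841937149453341692210321/1379227385882214400000000000000000000000000000000000000 : ℝ) * x ^ 18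

def vB1 (x : ℝ) : ℝ := (505521/80000 : ℝ) * x ^ 1 + (255551481441/25600000000 : ℝ) * x ^ 3 + (43062213483178587/8192000000000000 : ℝ) * x ^ 5 + (7256284407409974159609/5242880000000000000000 : ℝ) * x ^ 7 + (3668204149918297547139701289/16777216000000000000000000000 : ℝ) * x ^ 9 + (618118076690282564775869645105523/26843545600000000000000000000000000 : ℝ) * x ^ 11 + (104157222748849444142687466287796364161/60129542144000000000000000000000000000000 : ℝ) * x ^ 13 + (52653663401221119852455510645273105807032881/538760697610240000000000000000000000000000000000 : ℝ) * x ^ 15 + (2957503619583189080992573577434345080075229892889/689613692941107200000000000000000000000000000000000000 : ℝ) * x ^ 17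

def vB2 (x : ℝ) : ℝ := (505521/80000 : ℝ) + (766654444323/25600000000 : ℝ) * x ^ 2 + (43062213483178587/1638400000000000 : ℝ) * x ^ 4 + (50793990851869819117263/5242880000000000000000 : ℝ) * x ^ 6 + (33013837349264677924257311601/16777216000000000000000000000 : ℝ) * x ^ 8 + (6799298843593108212534566096160753/26843545600000000000000000000000000 : ℝ) * x ^ 10 + (1354043895735042773854937061741352734093/60129542144000000000000000000000000000000 : ℝ) * x ^ 12 + (157960990203663359557366531935819317421098643/107752139522048000000000000000000000000000000000 : ℝ) * x ^ 14 + (50277561532914214376873750816383866361278908179113/689613692941107200000000000000000000000000000000000000 : ℝ) * x ^ 16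

def Tnum (z : ℝ) : ℝ := z * (15 + z ^ 2)

def Tden (z : ℝ) : ℝ := 15 + 6 * z ^ 2 + z ^ 4 / 10

def gT (z : ℝ) : ℝ := Tnum z / Tden z

def gTd (z : ℝ) : ℝ := ((15 + 3 * z ^ 2) * Tden z - Tnum z * (12 * z + (2/5) * z ^ 3)) / (Tden z) ^ 2

def certSum (t : ℝ) : ℝ := (15349569562638543881743140741717880282505550012189633534486723/11033819087057715200000000000000000000000000000000000000000 : ℝ) * (1 - t) ^ 0 * t ^ 21 + (275357218417647807943618361394012421042967469742956646758756507/11033819087057715200000000000000000000000000000000000000000 : ℝ) * (1 - t) ^ 1 * t ^ 20 + (9669411014564181048201876662904792210132974877292184354506779461889/45035996273704960000000000000000000000000000000000000000000000 : ℝ) * (1 - t) ^ 2 * t ^ 19 + (148485694053339872665194872150353882554090806826452235369247553786823/126100789566373888000000000000000000000000000000000000000000000 : ℝ) * (1 - t) ^ 3 * t ^ 18 + (50927611191248583688887512258051377678486704559625245143531964067933049/11033819087057715200000000000000000000000000000000000000000000000 : ℝ) * (1 - t) ^ 4 * t ^ 17 + (54150136442854521984870886800752345698842350745647482001923027533/3940649673949184000000000000000000000000000000000000000000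 : ℝ) * (1 - t) ^ 5 * t ^ 16 + (277865768830417474677249626664912669951478769893842640956157081521/8620171161763840000000000000000000000000000000000000000000 : ℝ) * (1 - t) ^ 6 * t ^ 15 + (210332051338323269063892814139123467720987522620905140442331087/3448068464705536000000000000000000000000000000000000000 : ℝ) * (1 - t) ^ 7 * t ^ 14 + (23292624802986152033377796469260541062320478593029700851620631/246290604621824000000000000000000000000000000000000000 : ℝ) * (1 - t) ^ 8 * t ^ 13 + (478063954778814101608725450926949785376940327099671621870939/3940649673949184000000000000000000000000000000000000 : ℝ) * (1 - t) ^ 9 * t ^ 12 + (127558440549838171994437142550137016928264521019021570708947/985162418487296000000000000000000000000000000000000 : ℝ) * (1 - t) ^ 10 * t ^ 11 + (454009636489352863496451831222832613480449512160592901317979/3940649673949184000000000000000000000000000000000000 : ℝ) * (1 - t) ^ 11 * t ^ 10 + (33635682273955586523890314700388592146644695906845255301383/394064967394918400000000000000000000000000000000000 : ℝ) * (1 - t) ^ 12 * t ^ 9 + (289079935114875684966127818116282188613169135227678235312447/5516909543528857600000000000000000000000000000000000 : ℝ) * (1 - t) ^ 13 * t ^ 8 + (91097711941527064208931773587228307177519151930292745104149/3448068464705536000000000000000000000000000000000000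 : ℝ) * (1 - t) ^ 14 * t ^ 7 + (85033292031488988485634037076449128571643014765492745104149/7881299347898368000000000000000000000000000000000000 : ℝ) * (1 - t) ^ 15 * t ^ 6 + (13767896661255779414395370749607131708468247782145778547791/3940649673949184000000000000000000000000000000000000 : ℝ) * (1 - t) ^ 16 * t ^ 5 + (1369202509074953088085838400013604585480535975793975394199/1576259869579673600000000000000000000000000000000000 : ℝ) * (1 - t) ^ 17 * t ^ 4 + (62075697990286644001706154526053283301501893462840810221/394064967394918400000000000000000000000000000000000 : ℝ) * (1 - t) ^ 18 * t ^ 3 + (150304619063136376758888623671795917232505680388522430663/7881299347898368000000000000000000000000000000000000 : ℝ) * (1 - t) ^ 19 * t ^ 2 + (35527543144543486053443346421926639077501893462840810221/27584547717644288000000000000000000000000000000000000 : ℝ) * (1 - t) ^ 20 * t ^ 1 + (1592823357559581304704727034020094461591081223894619111/55169095435288576000000000000000000000000000000000000 : ℝ) * (1 - t) ^ 21 * t ^ 0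

def P0c : ℝ := (995155695203084625774597979905538408918776105380889/55169095435288576000000000000000000000000000000000000 : ℝ)

lemma vB_pos (x : ℝ) : 0 < vB x := by unfold vB; positivity

lemma vB1_nonneg (x : ℝ) (hx : 0 ≤ x) : 0 ≤ vB1 x := by
  unfold vB1
  have h2 : (0:ℝ) ≤ x ^ 2 := sq_nonneg x
  positivity

lemma Tden_pos (z : ℝ) : 0 < Tden z := by unfold Tden; positivity

lemma gT_nonneg (z : ℝ) (hz : 0 ≤ z) : 0 ≤ gT z := by
  unfold gT Tnum
  apply div_nonneg _ (Tden_pos z).le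
  nlinarith [sq_nonneg z]

lemma contvB : Continuous vB := by unfold vB; continuity

lemma contvB1 : Continuous vB1 := by unfold vB1; continuity

lemma contvB2 : Continuous vB2 := by unfold vB2; continuity

lemma hasDerivAt_vB (x : ℝ) : HasDerivAt vB (vB1 x) x := by
  have h : HasDerivAt vB ((0:ℝ) + (505521/160000 : ℝ) * ((2:ℕ) * x ^ 1) + (255551481441/102400000000 : ℝ) * ((4:ℕ) * x ^ 3) + (14354071161059529/16384000000000000 : ℝ) * ((6:ℕ) * x ^ 5) + (7256284407409974159609/41943040000000000000000 : ℝ) * ((8:ℕ) * x ^ 7) + (3668204149918297547139701289/167772160000000000000000000000 : ℝ) * ((10:ℕ) * x ^ 9) + (206039358896760854925289881701841/107374182400000000000000000000000000 : ℝ) * ((12:ℕ) * x ^ 11) + (104157222748849444142687466287796364161/841813590016000000000000000000000000000000 : ℝ) * ((14:ℕ) * x ^ 13) + (52653663401221119852455510645273105807032881/8620171161763840000000000000000000000000000000000 : ℝ) * ((16:ℕ) * x ^ 15) + (328611513287021008999174841937149453341692210321/1379227385882214400000000000000000000000000000000000000 : ℝ) * ((18:ℕ) * x ^ 17)) x :=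 by
    unfold vB
    exact ((((((((((hasDerivAt_const x (1 : ℝ)).add ((hasDerivAt_pow 2 x).const_mul (505521/160000 : ℝ))).add ((hasDerivAt_pow 4 x).const_mul (255551481441/102400000000 : ℝ))).add ((hasDerivAt_pow 6 x).const_mul (14354071161059529/16384000000000000 : ℝ))).add ((hasDerivAt_pow 8 x).const_mul (7256284407409974159609/41943040000000000000000 : ℝ))).add ((hasDerivAt_pow 10 x).const_mul (3668204149918297547139701289/167772160000000000000000000000 : ℝ))).add ((hasDerivAt_pow 12 x).const_mul (206039358896760854925289881701841/107374182400000000000000000000000000 : ℝ))).add ((hasDerivAt_pow 14 x).const_mul (104157222748849444142687466287796364161/841813590016000000000000000000000000000000 : ℝ))).add ((hasDerivAt_pow 16 x).const_mul (52653663401221119852455510645273105807032881/8620171161763840000000000000000000000000000000000 : ℝ))).add ((hasDerivAt_pow 18 x).const_mul (328611513287021008999174841937149453341692210321/1379227385882214400000000000000000000000000000000000000 : ℝ)))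
  convert h using 1
  unfold vB1; push_cast; ring

lemma hasDerivAt_vB1 (x : ℝ) : HasDerivAt vB1 (vB2 x) x := by
  have h : HasDerivAt vB1 ((505521/80000 : ℝ) * ((1:ℕ) * x ^ 0) + (255551481441/25600000000 : ℝ) * ((3:ℕ) * x ^ 2) + (43062213483178587/8192000000000000 : ℝ) * ((5:ℕ) * x ^ 4) + (7256284407409974159609/5242880000000000000000 : ℝ) * ((7:ℕ) * x ^ 6) + (3668204149918297547139701289/16777216000000000000000000000 : ℝ) * ((9:ℕ) * x ^ 8) + (618118076690282564775869645105523/26843545600000000000000000000000000 : ℝ) * ((11:ℕ) * x ^ 10) + (104157222748849444142687466287796364161/60129542144000000000000000000000000000000 : ℝ) * ((13:ℕ) * x ^ 12) + (52653663401221119852455510645273105807032881/538760697610240000000000000000000000000000000000 : ℝ) * ((15:ℕ) * x ^ 14) + (2957503619583189080992573577434345080075229892889/689613692941107200000000000000000000000000000000000000 : ℝ) * ((17:ℕ) * x ^ 16)) x := by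
    unfold vB1
    exact ((((((((((hasDerivAt_pow 1 x).const_mul (505521/80000 : ℝ)).add ((hasDerivAt_pow 3 x).const_mul (255551481441/25600000000 : ℝ))).add ((hasDerivAt_pow 5 x).const_mul (43062213483178587/8192000000000000 : ℝ))).add ((hasDerivAt_pow 7 x).const_mul (7256284407409974159609/5242880000000000000000 : ℝ))).add ((hasDerivAt_pow 9 x).const_mul (3668204149918297547139701289/16777216000000000000000000000 : ℝ))).add ((hasDerivAt_pow 11 x).const_mul (618118076690282564775869645105523/26843545600000000000000000000000000 : ℝ))).add ((hasDerivAt_pow 13 x).const_mul (104157222748849444142687466287796364161/60129542144000000000000000000000000000000 : ℝ))).add ((hasDerivAt_pow 15 x).const_mul (52653663401221119852455510645273105807032881/538760697610240000000000000000000000000000000000 : ℝ))).add ((hasDerivAt_pow 17 x).const_mul (2957503619583189080992573577434345080075229892889/689613692941107200000000000000000000000000000000000000 : ℝ)))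
  convert h using 1
  unfold vB2; push_cast; ring

lemma hasDerivAt_gT (z : ℝ) : HasDerivAt gT (gTd z) z := by
  have hnum : HasDerivAt Tnum (15 + 3 * z ^ 2) z := by
    have h : HasDerivAt (fun z : ℝ => z * (15 + z ^ 2))
        (1 * (15 + z ^ 2) + z * (0 + (2:ℕ) * z ^ 1)) z :=
      (hasDerivAt_id z).mul ((hasDerivAt_const z 15).add (hasDerivAt_pow 2 z))
    convert h using 1
    · rfl
    · push_cast; ring
  have hden : HasDerivAt Tden (12 * z + (2/5) * z ^ 3) z := by
    have h : HasDerivAt (fun z : ℝ => 15 + 6 * z ^ 2 + z ^ 4 / 10)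
        (0 + 6 * ((2:ℕ) * z ^ 1) + ((4:ℕ) * z ^ 3) / 10) z :=
      (((hasDerivAt_const z 15).add ((hasDerivAt_pow 2 z).const_mul 6)).add
        ((hasDerivAt_pow 4 z).div_const 10))
    convert h using 1
    · rfl
    · push_cast; ring
  have h := hnum.div hden (Tden_pos z).ne'
  exact h

lemma key_L (x : ℝ) (hx : 0 ≤ x) :
    x * vB2 x + vB1 x ≤ (505521/40000 : ℝ) * x * vB x := by
  have h : (505521/40000 : ℝ) * x * vB x - (x * vB2 x + vB1 x)
      = (505521/40000 : ℝ) * (328611513287021008999174841937149453341692210321/1379227385882214400000000000000000000000000000000000000 : ℝ) * x ^ 19 := by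
    unfold vB vB1 vB2; ring
  nlinarith [pow_nonneg hx 19]

lemma key_R (z : ℝ) : gTd z + gT z ^ 2 ≤ 1 := by
  have hd := Tden_pos z
  have hident : Tden z ^ 2 - (((15 + 3 * z ^ 2) * Tden z - Tnum z * (12 * z + (2/5) * z ^ 3)) + Tnum z ^ 2)
      = z ^ 4 * (15/2 + (3/10) * z ^ 2 + z ^ 4 / 100) := by
    unfold Tnum Tden; ring
  have h2 : gTd z + gT z ^ 2
      = (((15 + 3 * z ^ 2) * Tden z - Tnum z * (12 * z + (2/5) * z ^ 3)) + Tnum z ^ 2) / Tden z ^ 2 := by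
    unfold gTd gT
    field_simp
  rw [h2, div_le_one (by positivity)]
  nlinarith [pow_nonneg (sq_nonneg z) 2, sq_nonneg z, sq_nonneg (z^2), sq_nonneg (z^4)]

lemma jump_identity (t : ℝ) :
    vB1 t * Tden ((711/200) * (1 - t)) + (711/200) * Tnum ((711/200) * (1 - t)) * vB t
      - 3 * vB t * Tden ((711/200) * (1 - t)) = P0c + (1 - t) * certSum t := by
  unfold vB vB1 Tnum Tden certSum P0c; ring

lemma certSum_nonneg (t : ℝ) (h0 : 0 ≤ t) (h1 : t ≤ 1) : 0 ≤ certSum t := by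
  have h1t : (0:ℝ) ≤ 1 - t := by linarith
  unfold certSum
  repeat' apply add_nonneg
  all_goals exact mul_nonneg (mul_nonneg (by norm_num) (pow_nonneg h1t _)) (pow_nonneg h0 _)

lemma jump_ge_one (t : ℝ) (h0 : 0 ≤ t) (h1 : t ≤ 1) :
    1 ≤ vB1 t / (3 * vB t) + (711/600) * gT ((711/200) * (1 - t)) := by
  have hv := vB_pos t
  have hd := Tden_pos ((711/200) * (1 - t))
  have hP0 : (0:ℝ) < P0c := by unfold P0c; norm_num
  have hnum : 0 ≤ vB1 t * Tden ((711/200) * (1 - t)) + (711/200) * Tnum ((711/200) * (1 - t)) * vB t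
      - 3 * vB t * Tden ((711/200) * (1 - t)) := by
    rw [jump_identity t]
    have := certSum_nonneg t h0 h1
    nlinarith
  unfold gT
  set D := Tden ((711/200) * (1 - t)) with hD
  set Nn := Tnum ((711/200) * (1 - t)) with hN
  have key : vB1 t / (3 * vB t) + (711/600) * (Nn / D) - 1
      = (vB1 t * D + (711/200) * Nn * vB t - 3 * vB t * D) / ((3 * vB t) * D) := by
    field_simp
    ring
  have hq := div_nonneg hnum (by positivity : (0:ℝ) ≤ (3 * vB t) * D)
  linarith [key, hq]

lemma contgT : Continuous gT :=
  continuous_iff_continuousAt.2 fun z => (hasDerivAt_gT z).continuousAt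

lemma contgTd : Continuous gTd := by
  unfold gTd Tnum Tden
  apply Continuous.div (by continuity) (by continuity)
  intro z
  have h := Tden_pos z
  unfold Tden at h
  positivity

def PsiL (b s : ℝ) : ℝ := vB1 (s - b) / (3 * vB (s - b))

def PsiLd (b s : ℝ) : ℝ :=
  (vB2 (s - b) * vB (s - b) - vB1 (s - b) ^ 2) / (3 * vB (s - b) ^ 2)

def PsiR (b s : ℝ) : ℝ := -(711/600) * gT ((711/200) * (b + 1 - s))

def PsiRd (b s : ℝ) : ℝ := (505521/120000) * gTd ((711/200) * (b + 1 - s))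

lemma hasDerivAt_PsiL (b s : ℝ) : HasDerivAt (PsiL b) (PsiLd b s) s := by
  have h0 : HasDerivAt (fun s : ℝ => vB (s - b)) (vB1 (s - b)) s := by
    have h := (hasDerivAt_vB (s - b)).comp s ((hasDerivAt_id s).sub_const b)
    exact h.congr_deriv (mul_one _)
  have h1 : HasDerivAt (fun s : ℝ => vB1 (s - b)) (vB2 (s - b)) s := by
    have h := (hasDerivAt_vB1 (s - b)).comp s ((hasDerivAt_id s).sub_const b)
    exact h.congr_deriv (mul_one _)
  have hv := vB_pos (s - b)
  have hne : (3 : ℝ) * vB (s - b) ≠ 0 := by positivity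
  have h := h1.div (h0.const_mul 3) hne
  refine HasDerivAt.congr_deriv (f := PsiL b) h ?_; symm
  unfold PsiLd
  field_simp [hv.ne']

lemma hasDerivAt_PsiR (b s : ℝ) : HasDerivAt (PsiR b) (PsiRd b s) s := by
  have hin : HasDerivAt (fun s : ℝ => (711/200 : ℝ) * (b + 1 - s)) (-(711/200)) s := by
    have h1 : HasDerivAt (fun s : ℝ => b + 1 - s) (0 - 1) s :=
      (hasDerivAt_const s (b + 1)).sub (hasDerivAt_id s)
    have h2 := h1.const_mul ((711 : ℝ)/200)
    refine h2.congr_deriv ?_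
    ring
  have h := ((hasDerivAt_gT ((711/200) * (b + 1 - s))).comp s hin).const_mul (-(711/600 : ℝ))
  refine HasDerivAt.congr_deriv (f := PsiR b) h ?_; symm
  unfold PsiRd
  ring

lemma contPsiL (b : ℝ) : Continuous (PsiL b) :=
  continuous_iff_continuousAt.2 fun s => (hasDerivAt_PsiL b s).continuousAt

lemma contPsiR (b : ℝ) : Continuous (PsiR b) :=
  continuous_iff_continuousAt.2 fun s => (hasDerivAt_PsiR b s).continuousAt

lemma contPsiLd (b : ℝ) : Continuous (PsiLd b) := by
  have hcvb : Continuous (fun s : ℝ => vB (s - b)) := contvB.comp (continuous_id.sub continuous_const)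
  have hcvb1 : Continuous (fun s : ℝ => vB1 (s - b)) := contvB1.comp (continuous_id.sub continuous_const)
  have hcvb2 : Continuous (fun s : ℝ => vB2 (s - b)) := contvB2.comp (continuous_id.sub continuous_const)
  apply Continuous.div ((hcvb2.mul hcvb).sub (hcvb1.pow 2)) (continuous_const.mul (hcvb.pow 2))
  intro s
  have := vB_pos (s - b)
  show (3:ℝ) * vB (s - b) ^ 2 ≠ 0
  positivity

lemma contPsiRd (b : ℝ) : Continuous (PsiRd b) :=
  continuous_const.mul (contgTd.comp (continuous_const.mul ((continuous_const.sub continuous_id))))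

lemma PsiL_left (b : ℝ) : PsiL b b = 0 := by
  unfold PsiL
  norm_num [vB1]

lemma PsiR_right (b : ℝ) : PsiR b (b + 1) = 0 := by
  unfold PsiR
  norm_num [gT, Tnum]

lemma PsiL_nonneg (b s : ℝ) (h : b ≤ s) : 0 ≤ PsiL b s := by
  unfold PsiL
  have hv := vB_pos (s - b)
  exact div_nonneg (vB1_nonneg _ (by linarith)) (by positivity)

lemma alg_main (U Q P Pd S : ℝ) (hS : 0 < S)
    (hkey : 3 * P ^ 2 + Pd + P / S ≤ 168507/40000) :
    2 * U * (Q + U / (2 * S)) * P + U ^ 2 * Pd ≤ (1/3) * Q ^ 2 + (168507/40000) * U ^ 2 := by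
  have h1 : 2 * U * (Q + U / (2 * S)) * P = 2 * U * Q * P + U ^ 2 * (P / S) := by
    field_simp
  have hAM : 2 * U * Q * P ≤ (1/3) * Q ^ 2 + 3 * (U * P) ^ 2 := by
    nlinarith [sq_nonneg (3 * (U * P) - Q)]
  have h2 : U ^ 2 * (3 * P ^ 2 + Pd + P / S) ≤ (168507/40000) * U ^ 2 := by
    nlinarith [sq_nonneg U]
  nlinarith [h1, hAM, h2]

lemma keyL_applied (σ S : ℝ) (hσ : 0 < σ) (hσS : σ ≤ S) :
    3 * (vB1 σ / (3 * vB σ)) ^ 2 + (vB2 σ * vB σ - vB1 σ ^ 2) / (3 * vB σ ^ 2)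
      + (vB1 σ / (3 * vB σ)) / S ≤ 168507/40000 := by
  have hv := vB_pos σ
  have hS : 0 < S := lt_of_lt_of_le hσ hσS
  have hψ : 0 ≤ vB1 σ / (3 * vB σ) := div_nonneg (vB1_nonneg _ hσ.le) (by positivity)
  have h1 : (vB1 σ / (3 * vB σ)) / S ≤ (vB1 σ / (3 * vB σ)) / σ := by
    gcongr
  have h2 : 3 * (vB1 σ / (3 * vB σ)) ^ 2 + (vB2 σ * vB σ - vB1 σ ^ 2) / (3 * vB σ ^ 2)
      + (vB1 σ / (3 * vB σ)) / σ = (σ * vB2 σ + vB1 σ) / (3 * σ * vB σ) := by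
    field_simp
    ring
  have h3 : (σ * vB2 σ + vB1 σ) / (3 * σ * vB σ) ≤ 168507/40000 := by
    rw [div_le_iff₀ (by positivity)]
    nlinarith [key_L σ hσ.le]
  linarith

lemma bound_L (b s U Q : ℝ) (hb : 0 < b) (hbs : b ≤ s) :
    2 * U * (Q + U / (2 * s)) * PsiL b s + U ^ 2 * PsiLd b s
      ≤ (1/3) * Q ^ 2 + (168507/40000) * U ^ 2 := by
  rcases eq_or_lt_of_le hbs with heq | hlt
  · rw [← heq, PsiL_left]
    have hLd : PsiLd b b = 505521/240000 := by
      unfold PsiLd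
      norm_num [vB, vB1, vB2]
    rw [hLd]
    nlinarith [sq_nonneg Q, sq_nonneg U]
  · have hs0 : 0 < s := lt_trans hb hlt
    apply alg_main U Q _ _ s hs0
    have hk := keyL_applied (s - b) s (by linarith) (by linarith)
    unfold PsiL PsiLd
    convert hk using 3

lemma bound_R (b s U Q : ℝ) (hb : 0 < b) (hbs : b ≤ s) (hsc : s ≤ b + 1) :
    2 * U * (Q + U / (2 * s)) * PsiR b s + U ^ 2 * PsiRd b s
      ≤ (1/3) * Q ^ 2 + (168507/40000) * U ^ 2 := by
  have hs0 : 0 < s := lt_of_lt_of_le hb hbs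
  apply alg_main U Q _ _ s hs0
  set z := (711/200 : ℝ) * (b + 1 - s) with hz
  have hznn : 0 ≤ z := by
    have : (0:ℝ) ≤ b + 1 - s := by linarith
    positivity
  have hgTnn := gT_nonneg z hznn
  have hψnp : PsiR b s ≤ 0 := by
    unfold PsiR
    rw [← hz]
    nlinarith
  have hψs : PsiR b s / s ≤ 0 := div_nonpos_of_nonpos_of_nonneg hψnp hs0.le
  have hkR : 3 * PsiR b s ^ 2 + PsiRd b s ≤ 168507/40000 := by
    unfold PsiR PsiRd
    rw [← hz]
    nlinarith [key_R z]
  linarith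

lemma jump_PsiL_PsiR (b x : ℝ) (hxl : b ≤ x) (hxr : x ≤ b + 1) :
    1 ≤ PsiL b x - PsiR b x := by
  have hj := jump_ge_one (x - b) (by linarith) (by linarith)
  have harg : (711/200 : ℝ) * (1 - (x - b)) = (711/200) * (b + 1 - x) := by ring
  rw [harg] at hj
  unfold PsiL PsiR
  linarith
lemma pointwise_bound (b : ℝ) (hb : 0 < b) (u : ℝ → ℝ)
    (hu : ContDiffOn ℝ 1 u (Set.Icc b (b + 1))) (x : ℝ) (hx : x ∈ Set.Icc b (b + 1)) :
    u x ^ 2 ≤ (1/3) * (∫ s in b..(b + 1),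
        (derivWithin u (Set.Icc b (b + 1)) s - u s / (2 * s)) ^ 2)
      + (168507/40000) * ∫ s in b..(b + 1), u s ^ 2 := by
  obtain ⟨hxl, hxr⟩ := hx
  have hbc : b ≤ b + 1 := by linarith
  have hblt : b < b + 1 := by linarith
  set I : Set ℝ := Set.Icc b (b + 1) with hI
  set u' : ℝ → ℝ := derivWithin u I with hu'def
  have hucont : ContinuousOn u I := hu.continuousOn
  have hu'cont : ContinuousOn u' I :=
    hu.continuousOn_derivWithin (uniqueDiffOn_Icc hblt) le_rfl
  set q : ℝ → ℝ := fun s => u' s - u s / (2 * s) with hqdef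
  have hqcont : ContinuousOn q I := by
    apply hu'cont.sub
    apply hucont.div (by fun_prop)
    intro s hs
    have h1 : 0 < s := lt_of_lt_of_le hb hs.1
    positivity
  set g : ℝ → ℝ := fun s => (1/3) * q s ^ 2 + (168507/40000) * u s ^ 2 with hgdef
  have hgcont : ContinuousOn g I :=
    (continuousOn_const.mul (hqcont.pow 2)).add (continuousOn_const.mul (hucont.pow 2))
  have hders : ∀ s ∈ Set.Ioo b (b + 1), HasDerivAt u (u' s) s := by
    intro s hs
    exact ((hu.differentiableOn one_ne_zero) s
      (Set.Ioo_subset_Icc_self hs)).hasDerivWithinAt.hasDerivAt (Icc_mem_nhds hs.1 hs.2)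
  have hsubL : Set.Icc b x ⊆ I := Set.Icc_subset_Icc le_rfl hxr
  have hsubR : Set.Icc x (b + 1) ⊆ I := Set.Icc_subset_Icc hxl le_rfl
  set FLd : ℝ → ℝ := fun s => 2 * u s * u' s * PsiL b s + u s ^ 2 * PsiLd b s with hFLd
  set FRd : ℝ → ℝ := fun s => 2 * u s * u' s * PsiR b s + u s ^ 2 * PsiRd b s with hFRd
  -- FTC on the left piece
  have hFTCL : ∫ s in b..x, FLd s = u x ^ 2 * PsiL b x := by
    have hcont : ContinuousOn (fun s => u s ^ 2 * PsiL b s) (Set.Icc b x) :=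
      ((hucont.mono hsubL).pow 2).mul (contPsiL b).continuousOn
    have hderiv : ∀ s ∈ Set.Ioo b x,
        HasDerivWithinAt (fun s => u s ^ 2 * PsiL b s) (FLd s) (Set.Ioi s) s := by
      intro s hs
      have hsI : s ∈ Set.Ioo b (b + 1) := ⟨hs.1, lt_of_lt_of_le hs.2 hxr⟩
      have hu2 := (hders s hsI).pow 2
      norm_num at hu2
      have h := hu2.mul (hasDerivAt_PsiL b s)
      have h2 : HasDerivAt (fun s => u s ^ 2 * PsiL b s) (FLd s) s := by
        convert h using 1
        all_goals rfl
      exact h2.hasDerivWithinAt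
    have hint : IntervalIntegrable FLd volume b x := by
      apply ContinuousOn.intervalIntegrable
      rw [Set.uIcc_of_le hxl]
      exact (((continuous_const.continuousOn.mul (hucont.mono hsubL)).mul
        (hu'cont.mono hsubL)).mul (contPsiL b).continuousOn).add
        (((hucont.mono hsubL).pow 2).mul (contPsiLd b).continuousOn)
    have h := intervalIntegral.integral_eq_sub_of_hasDeriv_right_of_le hxl hcont hderiv hint
    rw [h, PsiL_left]
    ring
  -- FTC on the right piece
  have hFTCR : ∫ s in x..(b + 1), FRd s = -(u x ^ 2 * PsiR b x) := by
    have hcont : ContinuousOn (fun s => u s ^ 2 * PsiR b s) (Set.Icc x (b + 1)) :=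
      ((hucont.mono hsubR).pow 2).mul (contPsiR b).continuousOn
    have hderiv : ∀ s ∈ Set.Ioo x (b + 1),
        HasDerivWithinAt (fun s => u s ^ 2 * PsiR b s) (FRd s) (Set.Ioi s) s := by
      intro s hs
      have hsI : s ∈ Set.Ioo b (b + 1) := ⟨lt_of_le_of_lt hxl hs.1, hs.2⟩
      have hu2 := (hders s hsI).pow 2
      norm_num at hu2
      have h := hu2.mul (hasDerivAt_PsiR b s)
      have h2 : HasDerivAt (fun s => u s ^ 2 * PsiR b s) (FRd s) s := by
        convert h using 1
        all_goals rfl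
      exact h2.hasDerivWithinAt
    have hint : IntervalIntegrable FRd volume x (b + 1) := by
      apply ContinuousOn.intervalIntegrable
      rw [Set.uIcc_of_le hxr]
      exact (((continuous_const.continuousOn.mul (hucont.mono hsubR)).mul
        (hu'cont.mono hsubR)).mul (contPsiR b).continuousOn).add
        (((hucont.mono hsubR).pow 2).mul (contPsiRd b).continuousOn)
    have h := intervalIntegral.integral_eq_sub_of_hasDeriv_right_of_le hxr hcont hderiv hint
    rw [h, PsiR_right]
    ring
  -- pointwise bounds
  have hptL : ∀ s ∈ Set.Icc b x, FLd s ≤ g s := by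
    intro s hs
    have hs0 : 0 < s := lt_of_lt_of_le hb hs.1
    have hrw : FLd s = 2 * u s * (q s + u s / (2 * s)) * PsiL b s + u s ^ 2 * PsiLd b s := by
      simp only [hFLd, hqdef]
      have : u' s = u' s - u s / (2 * s) + u s / (2 * s) := by ring
      rw [← this]
    rw [hrw]
    exact bound_L b s (u s) (q s) hb hs.1
  have hptR : ∀ s ∈ Set.Icc x (b + 1), FRd s ≤ g s := by
    intro s hs
    have hsb : b ≤ s := le_trans hxl hs.1
    have hs0 : 0 < s := lt_of_lt_of_le hb hsb
    have hrw : FRd s = 2 * u s * (q s + u s / (2 * s)) * PsiR b s + u s ^ 2 * PsiRd b s := by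
      simp only [hFRd, hqdef]
      have : u' s = u' s - u s / (2 * s) + u s / (2 * s) := by ring
      rw [← this]
    rw [hrw]
    exact bound_R b s (u s) (q s) hb hsb hs.2
  -- integrability of g
  have hgi1 : IntervalIntegrable g volume b x := by
    apply ContinuousOn.intervalIntegrable
    rw [Set.uIcc_of_le hxl]
    exact hgcont.mono hsubL
  have hgi2 : IntervalIntegrable g volume x (b + 1) := by
    apply ContinuousOn.intervalIntegrable
    rw [Set.uIcc_of_le hxr]
    exact hgcont.mono hsubR
  have hintFLd : IntervalIntegrable FLd volume b x := by
    apply ContinuousOn.intervalIntegrable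
    rw [Set.uIcc_of_le hxl]
    exact (((continuous_const.continuousOn.mul (hucont.mono hsubL)).mul
      (hu'cont.mono hsubL)).mul (contPsiL b).continuousOn).add
      (((hucont.mono hsubL).pow 2).mul (contPsiLd b).continuousOn)
  have hintFRd : IntervalIntegrable FRd volume x (b + 1) := by
    apply ContinuousOn.intervalIntegrable
    rw [Set.uIcc_of_le hxr]
    exact (((continuous_const.continuousOn.mul (hucont.mono hsubR)).mul
      (hu'cont.mono hsubR)).mul (contPsiR b).continuousOn).add
      (((hucont.mono hsubR).pow 2).mul (contPsiRd b).continuousOn)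
  have h5 : ∫ s in b..x, FLd s ≤ ∫ s in b..x, g s :=
    intervalIntegral.integral_mono_on hxl hintFLd hgi1 hptL
  have h6 : ∫ s in x..(b + 1), FRd s ≤ ∫ s in x..(b + 1), g s :=
    intervalIntegral.integral_mono_on hxr hintFRd hgi2 hptR
  have h7 : (∫ s in b..x, g s) + ∫ s in x..(b + 1), g s = ∫ s in b..(b + 1), g s :=
    intervalIntegral.integral_add_adjacent_intervals hgi1 hgi2
  have hjump := jump_PsiL_PsiR b x hxl hxr
  have hmul : u x ^ 2 * 1 ≤ u x ^ 2 * (PsiL b x - PsiR b x) :=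
    mul_le_mul_of_nonneg_left hjump (sq_nonneg (u x))
  have hfinal : u x ^ 2 ≤ ∫ s in b..(b + 1), g s := by
    nlinarith [hFTCL, hFTCR, h5, h6, h7, hmul]
  have hsplit : (∫ s in b..(b + 1), g s)
      = (1/3) * (∫ s in b..(b + 1), q s ^ 2) + (168507/40000) * ∫ s in b..(b + 1), u s ^ 2 := by
    have hi : IntervalIntegrable (fun s => (1/3 : ℝ) * q s ^ 2) volume b (b + 1) := by
      apply ContinuousOn.intervalIntegrable
      rw [Set.uIcc_of_le hbc]
      exact continuous_const.continuousOn.mul (hqcont.pow 2)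
    have hj : IntervalIntegrable (fun s => (168507/40000 : ℝ) * u s ^ 2) volume b (b + 1) := by
      apply ContinuousOn.intervalIntegrable
      rw [Set.uIcc_of_le hbc]
      exact continuous_const.continuousOn.mul (hucont.pow 2)
    simp only [hgdef]
    rw [intervalIntegral.integral_add hi hj, intervalIntegral.integral_const_mul,
      intervalIntegral.integral_const_mul]
  have hqeq : (∫ s in b..(b + 1), (derivWithin u I s - u s / (2 * s)) ^ 2)
      = ∫ s in b..(b + 1), q s ^ 2 := rfl
  rw [hqeq]
  linarith

end

open MeasureTheory Set in
/-- Lower bound for the lowest eigenvalue of `H_b − V`: if `b > 0` and `V ≥ 0` is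
integrable on `(b, b+1)` with `∫_b^{b+1} V dr ≤ 3`, then for every `C¹` function `u` on
`[b, b+1]`, `h_b[u] − ∫_b^{b+1} V u² dr ≥ −(3.555)² ∫_b^{b+1} u² dr`. -/
theorem lowest_eigenvalue_bound (b : ℝ) (hb : 0 < b) (V : ℝ → ℝ)
    (hV : ∀ r ∈ Set.Ioo b (b + 1), 0 ≤ V r)
    (hVint : MeasureTheory.IntegrableOn V (Set.Ioo b (b + 1)))
    (hVsmall : (∫ r in b..(b + 1), V r) ≤ 3)
    (u : ℝ → ℝ) (hu : ContDiffOn ℝ 1 u (Set.Icc b (b + 1))) :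
    (∫ r in b..(b + 1),
        (derivWithin (fun s : ℝ => u s * s ^ (-(1 / 2) : ℝ)) (Set.Icc b (b + 1)) r) ^ 2
          * r)
      - (∫ r in b..(b + 1), V r * u r ^ 2)
      ≥ -(3.555 : ℝ) ^ 2 * ∫ r in b..(b + 1), u r ^ 2 := by
  have hbc : b ≤ b + 1 := by linarith
  have hblt : b < b + 1 := by linarith
  set I : Set ℝ := Set.Icc b (b + 1) with hI
  have hucont : ContinuousOn u I := hu.continuousOn
  -- rewrite the weighted derivative integrand
  have hqeqptwise : ∀ r ∈ I, (derivWithin (fun s : ℝ => u s * s ^ (-(1 / 2) : ℝ)) I r) ^ 2 * r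
      = (derivWithin u I r - u r / (2 * r)) ^ 2 := by
    intro r hr
    have hr0 : 0 < r := lt_of_lt_of_le hb hr.1
    have hUD : UniqueDiffWithinAt ℝ I r := (uniqueDiffOn_Icc hblt) r hr
    have hdu : DifferentiableWithinAt ℝ u I r := (hu.differentiableOn one_ne_zero) r hr
    have hg : HasDerivAt (fun s : ℝ => s ^ (-(1 / 2) : ℝ))
        (-(1 / 2) * r ^ ((-(1 / 2) : ℝ) - 1)) r :=
      Real.hasDerivAt_rpow_const (Or.inl hr0.ne')
    have hdg : DifferentiableWithinAt ℝ (fun s : ℝ => s ^ (-(1 / 2) : ℝ)) I r :=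
      hg.differentiableAt.differentiableWithinAt
    have hmul : derivWithin (fun s : ℝ => u s * s ^ (-(1 / 2) : ℝ)) I r
        = derivWithin u I r * r ^ (-(1 / 2) : ℝ)
          + u r * derivWithin (fun s : ℝ => s ^ (-(1 / 2) : ℝ)) I r :=
      derivWithin_mul hdu hdg
    have hdg2 : derivWithin (fun s : ℝ => s ^ (-(1 / 2) : ℝ)) I r
        = -(1 / 2) * r ^ ((-(1 / 2) : ℝ) - 1) :=
      hg.hasDerivWithinAt.derivWithin hUD
    rw [hmul, hdg2]
    have e1 : r ^ ((-(1 / 2) : ℝ) - 1) = r ^ (-(1 / 2) : ℝ) * r⁻¹ := by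
      rw [← Real.rpow_neg_one r, ← Real.rpow_add hr0]
      norm_num
    have e2 : r ^ (-(1 / 2) : ℝ) * r ^ (-(1 / 2) : ℝ) * r = 1 := by
      have hh : (-(1 / 2) : ℝ) + (-(1 / 2)) = -1 := by norm_num
      rw [← Real.rpow_add hr0, hh, Real.rpow_neg_one]
      exact inv_mul_cancel₀ hr0.ne'
    rw [e1]
    have e3 : (derivWithin u I r * r ^ (-(1 / 2) : ℝ)
          + u r * (-(1 / 2) * (r ^ (-(1 / 2) : ℝ) * r⁻¹))) ^ 2 * r
        = (derivWithin u I r - u r / (2 * r)) ^ 2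
            * (r ^ (-(1 / 2) : ℝ) * r ^ (-(1 / 2) : ℝ) * r) := by
      field_simp
      ring
    rw [e3, e2, mul_one]
  have hIrw : (∫ r in b..(b + 1),
        (derivWithin (fun s : ℝ => u s * s ^ (-(1 / 2) : ℝ)) I r) ^ 2 * r)
      = ∫ s in b..(b + 1), (derivWithin u I s - u s / (2 * s)) ^ 2 := by
    apply intervalIntegral.integral_congr
    intro r hr
    rw [Set.uIcc_of_le hbc] at hr
    exact hqeqptwise r hr
  -- maximum point of u^2
  obtain ⟨x₀, hx₀I, hx₀max⟩ :=
    isCompact_Icc.exists_isMaxOn (Set.nonempty_Icc.2 hbc) (hucont.pow 2)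
  have hmax : ∀ y ∈ I, u y ^ 2 ≤ u x₀ ^ 2 := fun y hy => hx₀max hy
  -- bound the potential term
  have hVu2 : (∫ r in b..(b + 1), V r * u r ^ 2) ≤ 3 * u x₀ ^ 2 := by
    have h1 : (∫ r in b..(b + 1), V r * u r ^ 2)
        = ∫ r in Set.Ioo b (b + 1), V r * u r ^ 2 := by
      rw [intervalIntegral.integral_of_le hbc, MeasureTheory.integral_Ioc_eq_integral_Ioo]
    have humeas : AEMeasurable u (volume.restrict (Set.Ioo b (b + 1))) :=
      (hucont.mono Set.Ioo_subset_Icc_self).aemeasurable measurableSet_Ioo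
    have hi1 : MeasureTheory.IntegrableOn (fun r => V r * u r ^ 2) (Set.Ioo b (b + 1)) := by
      apply MeasureTheory.Integrable.mono' (hVint.abs.mul_const (u x₀ ^ 2))
      · exact hVint.aestronglyMeasurable.mul ((humeas.pow_const 2).aestronglyMeasurable)
      · filter_upwards [MeasureTheory.ae_restrict_mem measurableSet_Ioo] with r hr
        have h2 : ‖V r * u r ^ 2‖ = |V r| * (u r ^ 2) := by
          rw [norm_mul, Real.norm_eq_abs, Real.norm_eq_abs, abs_of_nonneg (sq_nonneg (u r))]
        rw [h2]
        exact mul_le_mul_of_nonneg_left (hmax r (Set.Ioo_subset_Icc_self hr)) (abs_nonneg _)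
    have hi2 : MeasureTheory.IntegrableOn (fun r => V r * u x₀ ^ 2) (Set.Ioo b (b + 1)) :=
      hVint.mul_const _
    have hmono : (∫ r in Set.Ioo b (b + 1), V r * u r ^ 2)
        ≤ ∫ r in Set.Ioo b (b + 1), V r * u x₀ ^ 2 := by
      apply MeasureTheory.setIntegral_mono_on hi1 hi2 measurableSet_Ioo
      intro r hr
      exact mul_le_mul_of_nonneg_left (hmax r (Set.Ioo_subset_Icc_self hr)) (hV r hr)
    have h2 : (∫ r in Set.Ioo b (b + 1), V r * u x₀ ^ 2)
        = (∫ r in Set.Ioo b (b + 1), V r) * u x₀ ^ 2 :=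
      MeasureTheory.integral_mul_const _ _
    have h3 : (∫ r in Set.Ioo b (b + 1), V r) ≤ 3 := by
      rw [← MeasureTheory.integral_Ioc_eq_integral_Ioo]
      rw [← intervalIntegral.integral_of_le hbc]
      exact hVsmall
    have h4 : (∫ r in Set.Ioo b (b + 1), V r) * u x₀ ^ 2 ≤ 3 * u x₀ ^ 2 :=
      mul_le_mul_of_nonneg_right h3 (sq_nonneg _)
    linarith [h1 ▸ hmono, h2 ▸ h4]
  have hpb := pointwise_bound b hb u hu x₀ hx₀I
  have hk : ((3.555 : ℝ)) ^ 2 = 505521/40000 := by norm_num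
  rw [hIrw, ge_iff_le, hk]
  linarith [hpb, hVu2]
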